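/- Fix rho ∈ (0,1) small enough and constants as follows. Suppose x ∈ O and |O ∩ B(x,L)| / |B(x,L)| < delta for some integer L, where O ⊆ Z^d is a set of obstacles. For each radius l let X_l(x) be a skeletal set for O ∩ B(x,l) (pairwise distances ≥ l^{1/2d}, covering radius l^{1/2d}, containing x) and let X°_l(x) = X_l(x) ∩ B(x, l/2). Then there exists rho > 0 independent of L and delta such that for some l with L^{5/6} ≤ l ≤ L one has both |O ∩ B(x,l)|/|B(x,l)| < delta and |X°_l(x)| ≥ rho · min(|X_l(x)|, delta · l^{d-1/2}). -/

import Mathlib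

/-- Embedding of lattice points into Euclidean space. -/
noncomputable def toR {d : ℕ} (x : Fin d → ℤ) : EuclideanSpace ℝ (Fin d) :=
  WithLp.toLp 2 (fun i => (x i : ℝ))

/-- The lattice ball of Euclidean radius `r` around `x`. -/
def latBall {d : ℕ} (x : Fin d → ℤ) (r : ℝ) : Set (Fin d → ℤ) :=
  {y | dist (toR x) (toR y) ≤ r}

set_option maxHeartbeats 1000000

variable {d : ℕ}

lemma dist_toR_eq (a b : Fin d → ℤ) :
    dist (toR a) (toR b) = Real.sqrt (∑ i, ((a i - b i : ℤ) : ℝ)^2) := by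
  rw [EuclideanSpace.dist_eq]
  congr 1
  refine Finset.sum_congr rfl fun i _ => ?_
  rw [Real.dist_eq]
  show |toR a i - toR b i| ^ 2 = _
  rw [sq_abs]
  show ((a i:ℝ) - (b i:ℝ))^2 = _
  push_cast
  ring

lemma coord_le_dist (a b : Fin d → ℤ) (i : Fin d) :
    |((a i - b i : ℤ) : ℝ)| ≤ dist (toR a) (toR b) := by
  rw [dist_toR_eq]
  rw [← Real.sqrt_sq_eq_abs]
  apply Real.sqrt_le_sqrt
  exact Finset.single_le_sum (f := fun i => ((a i - b i:ℤ):ℝ)^2) (fun j _ => sq_nonneg _) (Finset.mem_univ i)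

lemma dist_le_of_coord (a b : Fin d → ℤ) (M : ℝ) (hM : 0 ≤ M)
    (h : ∀ i, |((a i - b i : ℤ) : ℝ)| ≤ M) : dist (toR a) (toR b) ≤ d * M := by
  rw [dist_toR_eq]
  have : (∑ i, ((a i - b i:ℤ):ℝ)^2) ≤ d * M^2 := by
    calc (∑ i, ((a i - b i:ℤ):ℝ)^2) ≤ ∑ _i : Fin d, M^2 := by
          refine Finset.sum_le_sum fun i _ => ?_
          rw [← sq_abs]
          exact pow_le_pow_left₀ (abs_nonneg _) (h i) 2
      _ = d * M^2 := by simp [Finset.sum_const, mul_comm]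
  calc Real.sqrt (∑ i, ((a i - b i:ℤ):ℝ)^2) ≤ Real.sqrt ((d*M)^2) := by
        apply Real.sqrt_le_sqrt
        calc (∑ i, ((a i - b i:ℤ):ℝ)^2) ≤ d * M^2 := this
          _ ≤ (d*M)^2 := by
            rw [mul_pow]
            have hdd : (d:ℝ) ≤ (d:ℝ)^2 := by
              have : d ≤ d^2 := Nat.le_self_pow (by norm_num) d
              exact_mod_cast this
            nlinarith [sq_nonneg M]
    _ = d * M := Real.sqrt_sq (by positivity)

noncomputable def boxF (z : Fin d → ℤ) (m : ℕ) : Finset (Fin d → ℤ) :=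
  Fintype.piFinset fun i => Finset.Icc (z i - m) (z i + m)

lemma mem_boxF {z y : Fin d → ℤ} {m : ℕ} :
    y ∈ boxF z m ↔ ∀ i, |y i - z i| ≤ (m : ℤ) := by
  simp only [boxF, Fintype.mem_piFinset, Finset.mem_Icc, abs_le]
  constructor
  · intro h i; have := h i; omega
  · intro h i; have := h i; omega

lemma card_boxF (z : Fin d → ℤ) (m : ℕ) : (boxF z m).card = (2*m+1)^d := by
  rw [boxF, Fintype.card_piFinset]
  have : ∀ i, (Finset.Icc (z i - m) (z i + m)).card = 2*m+1 := by
    intro i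
    rw [Int.card_Icc]
    omega
  simp [this]

lemma latBall_subset_boxF (x : Fin d → ℤ) {r : ℝ} (hr : 0 ≤ r) :
    latBall x r ⊆ ↑(boxF x ⌊r⌋₊) := by
  intro y hy
  simp only [Finset.coe_sort_coe, Finset.mem_coe]
  rw [mem_boxF]
  intro i
  have h1 : |((x i - y i : ℤ) : ℝ)| ≤ r := le_trans (coord_le_dist x y i) hy
  have h2 : ((|x i - y i| : ℤ) : ℝ) ≤ r := by rwa [Int.cast_abs]
  have h3 : |x i - y i| ≤ ⌊r⌋ := Int.le_floor.mpr h2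
  have h4 : ((⌊r⌋₊ : ℤ)) = ⌊r⌋ := by
    rw [← Int.floor_toNat, Int.toNat_of_nonneg (Int.floor_nonneg.mpr hr)]
  rw [abs_sub_comm, h4]
  exact h3

lemma latBall_finite (x : Fin d → ℤ) (r : ℝ) : (latBall x r).Finite := by
  rcases le_or_gt 0 r with h | h
  · exact Set.Finite.subset (boxF x ⌊r⌋₊).finite_toSet (latBall_subset_boxF x h)
  · convert Set.finite_empty
    ext y
    simp only [latBall, Set.mem_setOf_eq, Set.mem_empty_iff_false, iff_false, not_le]
    exact lt_of_lt_of_le h dist_nonneg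

lemma ncard_latBall_le (x : Fin d → ℤ) {r : ℝ} (hr : 1 ≤ r) :
    ((latBall x r).ncard : ℝ) ≤ (3*r)^d := by
  have h0 : (0:ℝ) ≤ r := le_trans zero_le_one hr
  have h1 : (latBall x r).ncard ≤ (boxF x ⌊r⌋₊).card := by
    rw [← Set.ncard_coe_finset]
    exact Set.ncard_le_ncard (latBall_subset_boxF x h0) (boxF x ⌊r⌋₊).finite_toSet
  calc ((latBall x r).ncard : ℝ) ≤ ((boxF x ⌊r⌋₊).card : ℝ) := by exact_mod_cast h1
    _ = ((2*⌊r⌋₊+1 : ℕ) : ℝ)^d := by rw [card_boxF]; push_cast; ring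
    _ ≤ (3*r)^d := by
        apply pow_le_pow_left₀ (by positivity)
        have := Nat.floor_le h0
        push_cast
        linarith

lemma subset_ncard_le {S : Set (Fin d → ℤ)} (x : Fin d → ℤ) {r : ℝ} (hr : 1 ≤ r)
    (h : S ⊆ latBall x r) : ((S.ncard : ℝ)) ≤ (3*r)^d := by
  have h1 : (S.ncard : ℝ) ≤ ((latBall x r).ncard : ℝ) := by
    exact_mod_cast Set.ncard_le_ncard h (latBall_finite x r)
  exact le_trans h1 (ncard_latBall_le x hr)

lemma boxF_subset_latBall (x : Fin d → ℤ) {m : ℕ} {r : ℝ} (h : (d:ℝ) * m ≤ r) :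
    ↑(boxF x m) ⊆ latBall x r := by
  intro y hy
  rw [Finset.mem_coe, mem_boxF] at hy
  show dist (toR x) (toR y) ≤ r
  refine le_trans (dist_le_of_coord x y m (by positivity) fun i => ?_) h
  have := hy i
  rw [abs_sub_comm] at this
  have : ((|x i - y i| : ℤ) : ℝ) ≤ ((m:ℤ):ℝ) := by exact_mod_cast this
  rwa [Int.cast_abs] at this

lemma ncard_latBall_ge (x : Fin d → ℤ) {r : ℝ} (hd : 1 ≤ d) (hr : (d:ℝ) ≤ r) :
    (r/d)^d ≤ ((latBall x r).ncard : ℝ) := by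
  have hd0 : (0:ℝ) < d := by exact_mod_cast hd
  have hrd : 1 ≤ r / d := (one_le_div hd0).mpr hr
  set m := ⌊r/d⌋₊ with hm
  have hsub : ↑(boxF x m) ⊆ latBall x r := by
    apply boxF_subset_latBall
    have : (m:ℝ) ≤ r/d := Nat.floor_le (by linarith)
    calc (d:ℝ) * m ≤ d * (r/d) := by nlinarith
      _ = r := by field_simp
  have h1 : (boxF x m).card ≤ (latBall x r).ncard := by
    rw [← Set.ncard_coe_finset]
    exact Set.ncard_le_ncard hsub (latBall_finite x r)
  have h2 : r/d ≤ ((2*m+1 : ℕ) : ℝ) := by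
    have := Nat.lt_floor_add_one (r/d)
    have hm1 : (1:ℝ) ≤ (m:ℝ) := by
      have : 1 ≤ m := (Nat.one_le_floor_iff _).mpr hrd
      exact_mod_cast this
    push_cast
    linarith
  calc (r/d)^d ≤ (((2*m+1:ℕ)):ℝ)^d := pow_le_pow_left₀ (by positivity) h2 d
    _ = ((boxF x m).card : ℝ) := by rw [card_boxF]; push_cast; ring
    _ ≤ _ := by exact_mod_cast h1

lemma packing_master {c : Fin d → ℤ} {S : Set (Fin d → ℤ)} {r s : ℝ} (hd : 1 ≤ d)
    (hS : S ⊆ latBall c r)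
    (hsep : ∀ a ∈ S, ∀ b ∈ S, a ≠ b → s ≤ dist (toR a) (toR b))
    (hs : 3*(d:ℝ) ≤ s) (hr : 1 ≤ r) :
    (S.ncard : ℝ) * (s/(3*d))^d ≤ (3*(r+s))^d := by
  have hd0 : (0:ℝ) < d := by exact_mod_cast hd
  have hs0 : (0:ℝ) < s := by nlinarith
  have hsd : 1 ≤ s/(3*d) := (one_le_div (by linarith)).mpr hs
  set m := ⌊s/(3*d)⌋₊ with hmdef
  have hm1 : 1 ≤ m := (Nat.one_le_floor_iff _).mpr hsd
  have hmle : (m:ℝ) ≤ s/(3*d) := Nat.floor_le (by linarith)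
  have hdm : (d:ℝ) * m ≤ s/3 := by
    calc (d:ℝ)*m ≤ d * (s/(3*d)) := by nlinarith
      _ = s/3 := by field_simp
  have hSfin : S.Finite := Set.Finite.subset (latBall_finite c r) hS
  set F := hSfin.toFinset with hF
  -- disjointness
  have hdisj : ∀ w ∈ F, ∀ w' ∈ F, w ≠ w' → Disjoint (boxF w m) (boxF w' m) := by
    intro w hw w' hw' hne
    rw [Set.Finite.mem_toFinset] at hw hw'
    rw [Finset.disjoint_left]
    intro y hy hy'
    rw [mem_boxF] at hy hy'
    have hdist : dist (toR w) (toR w') ≤ (d:ℝ) * (2*m) := by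
      apply dist_le_of_coord _ _ _ (by positivity)
      intro i
      have h1 := hy i; have h2 := hy' i
      have : |w i - w' i| ≤ (2*m : ℤ) := by
        have := abs_sub_abs_le_abs_sub (w i - y i) (w' i - y i)
        have h3 : |w i - w' i| ≤ |y i - w i| + |y i - w' i| := by
          rw [abs_sub_comm (y i) (w i), abs_sub_comm (y i) (w' i)]
          have := abs_sub (w i - y i) (w' i - y i)
          calc |w i - w' i| = |(w i - y i) - (w' i - y i)| := by ring_nf
            _ ≤ |w i - y i| + |w' i - y i| := abs_sub _ _
        omega
      calc |((w i - w' i : ℤ) : ℝ)| = ((|w i - w' i| : ℤ) : ℝ) := by rw [Int.cast_abs]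
        _ ≤ ((2*m : ℤ) : ℝ) := by exact_mod_cast this
        _ = 2*m := by push_cast; ring
    have hlow := hsep w hw w' hw' hne
    have : s ≤ (d:ℝ) * (2*m) := le_trans hlow hdist
    nlinarith
  have hcard : (F.biUnion (fun w => boxF w m)).card = F.card * (2*m+1)^d := by
    rw [Finset.card_biUnion hdisj]
    simp [card_boxF, Finset.sum_const, mul_comm]
  have hsub2 : (F.biUnion (fun w => boxF w m)) ⊆ boxF c ⌊r+s⌋₊ := by
    intro y hy
    rw [Finset.mem_biUnion] at hy
    obtain ⟨w, hw, hyw⟩ := hy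
    rw [Set.Finite.mem_toFinset] at hw
    have h1 : dist (toR c) (toR w) ≤ r := hS hw
    have h2 : dist (toR w) (toR y) ≤ (d:ℝ) * m := by
      apply dist_le_of_coord _ _ _ (by positivity)
      intro i
      rw [mem_boxF] at hyw
      have := hyw i
      rw [abs_sub_comm] at this
      calc |((w i - y i:ℤ):ℝ)| = ((|w i - y i|:ℤ):ℝ) := by rw [Int.cast_abs]
        _ ≤ ((m:ℤ):ℝ) := by exact_mod_cast this
        _ = m := by push_cast; ring
    have : y ∈ latBall c (r+s) := by
      show dist (toR c) (toR y) ≤ r + s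
      calc dist (toR c) (toR y) ≤ dist (toR c) (toR w) + dist (toR w) (toR y) := dist_triangle _ _ _
        _ ≤ r + d*m := by linarith
        _ ≤ r + s := by linarith
    have := latBall_subset_boxF c (by linarith : (0:ℝ) ≤ r+s) this
    exact this
  have hcard2 : F.card * (2*m+1)^d ≤ (2*⌊r+s⌋₊+1)^d := by
    rw [← hcard, ← card_boxF c ⌊r+s⌋₊]
    exact Finset.card_le_card hsub2
  have hncard : S.ncard = F.card := by rw [hF, Set.ncard_eq_toFinset_card _ hSfin]
  have hq1 : (s/(3*(d:ℝ))) ≤ ((2*m+1:ℕ):ℝ) := by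
    have := Nat.lt_floor_add_one (s/(3*d))
    push_cast
    have hm1' : (1:ℝ) ≤ (m:ℝ) := by exact_mod_cast hm1
    linarith
  have hq2 : ((2*⌊r+s⌋₊+1:ℕ):ℝ) ≤ 3*(r+s) := by
    have := Nat.floor_le (by linarith : (0:ℝ) ≤ r+s)
    push_cast
    linarith
  calc (S.ncard : ℝ) * (s/(3*d))^d ≤ (F.card : ℝ) * ((2*m+1:ℕ):ℝ)^d := by
        rw [hncard]
        exact mul_le_mul_of_nonneg_left (pow_le_pow_left₀ (by positivity) hq1 d) (by positivity)
    _ = ((F.card * (2*m+1)^d : ℕ) : ℝ) := by push_cast; ring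
    _ ≤ (((2*⌊r+s⌋₊+1)^d : ℕ) : ℝ) := by exact_mod_cast hcard2
    _ ≤ (3*(r+s))^d := by
        push_cast
        exact pow_le_pow_left₀ (by positivity) (by push_cast at hq2 ⊢; linarith) d

lemma packing_card_le {c : Fin d → ℤ} {S : Set (Fin d → ℤ)} {r s : ℝ} (hd : 1 ≤ d)
    (hS : S ⊆ latBall c r)
    (hsep : ∀ a ∈ S, ∀ b ∈ S, a ≠ b → s ≤ dist (toR a) (toR b))
    (hs : 3*(d:ℝ) ≤ s) (hr : 1 ≤ r) (hr2 : r ≤ 2*s) :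
    S.ncard ≤ (27*d)^d := by
  have hd0 : (0:ℝ) < d := by exact_mod_cast hd
  have hs0 : (0:ℝ) < s := by nlinarith
  have h1 := packing_master hd hS hsep hs hr
  have h2 : (3*(r+s))^d ≤ (9*s)^d := by
    apply pow_le_pow_left₀ (by positivity)
    linarith
  have hq : (0:ℝ) < (s/(3*d))^d := by positivity
  have key : (S.ncard : ℝ) ≤ ((27*d:ℕ):ℝ)^d := by
    calc (S.ncard : ℝ) ≤ (3*(r+s))^d / (s/(3*d))^d := (le_div_iff₀ hq).mpr h1
      _ ≤ (9*s)^d / (s/(3*d))^d := by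
          gcongr
      _ = ((27*d:ℕ):ℝ)^d := by
          rw [← div_pow]
          congr 1
          push_cast
          field_simp
          ring
  have : (S.ncard : ℝ) ≤ (((27*d)^d : ℕ) : ℝ) := by push_cast at key ⊢; exact key
  exact_mod_cast this

lemma covering_bound {O : Set (Fin d → ℤ)} (x : Fin d → ℤ) {X : Set (Fin d → ℤ)} {l s : ℝ}
    (hs : 1 ≤ s) (hXfin : X.Finite)
    (hcov : ∀ y ∈ O ∩ latBall x l, ∃ z ∈ X, dist (toR y) (toR z) ≤ s) :
    ((O ∩ latBall x l).ncard : ℝ) ≤ (X.ncard) * (3*s)^d := by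
  classical
  have hfin : (O ∩ latBall x l).Finite :=
    Set.Finite.subset (latBall_finite x l) Set.inter_subset_right
  set G := hfin.toFinset with hG
  set T := hXfin.toFinset with hT
  have hsub : G ⊆ T.biUnion (fun z => boxF z ⌊s⌋₊) := by
    intro y hy
    rw [hG, Set.Finite.mem_toFinset] at hy
    obtain ⟨z, hz, hdz⟩ := hcov y hy
    rw [Finset.mem_biUnion]
    refine ⟨z, by rw [hT, Set.Finite.mem_toFinset]; exact hz, ?_⟩
    have : y ∈ latBall z s := by
      show dist (toR z) (toR y) ≤ s
      rw [dist_comm]; exact hdz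
    exact latBall_subset_boxF z (by linarith) this
  have h1 : G.card ≤ T.card * (2*⌊s⌋₊+1)^d := by
    calc G.card ≤ (T.biUnion (fun z => boxF z ⌊s⌋₊)).card := Finset.card_le_card hsub
      _ ≤ ∑ z ∈ T, (boxF z ⌊s⌋₊).card := Finset.card_biUnion_le
      _ = T.card * (2*⌊s⌋₊+1)^d := by simp [card_boxF, Finset.sum_const, mul_comm]
  have hGcard : (O ∩ latBall x l).ncard = G.card := Set.ncard_eq_toFinset_card _ hfin
  have hTcard : X.ncard = T.card := Set.ncard_eq_toFinset_card _ hXfin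
  have h2 : ((2*⌊s⌋₊+1 : ℕ):ℝ) ≤ 3*s := by
    have := Nat.floor_le (by linarith : (0:ℝ) ≤ s)
    push_cast
    linarith
  calc ((O ∩ latBall x l).ncard : ℝ) = G.card := by rw [hGcard]
    _ ≤ (T.card : ℝ) * ((2*⌊s⌋₊+1 : ℕ):ℝ)^d := by exact_mod_cast h1
    _ ≤ (T.card : ℝ) * (3*s)^d := by
        apply mul_le_mul_of_nonneg_left (pow_le_pow_left₀ (by positivity) h2 d) (by positivity)
    _ = (X.ncard) * (3*s)^d := by rw [hTcard]

lemma comparison (hd : 1 ≤ d) {O : Set (Fin d → ℤ)} {x : Fin d → ℤ}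
    {Xl X4 : Set (Fin d → ℤ)} {l : ℝ} (hl : 1 ≤ l)
    (hXl : Xl ⊆ O ∩ latBall x l)
    (hsep : ∀ a ∈ Xl, ∀ b ∈ Xl, a ≠ b → l ^ ((1:ℝ)/(2*(d:ℝ))) ≤ dist (toR a) (toR b))
    (hX4fin : X4.Finite)
    (hcov : ∀ y ∈ O ∩ latBall x (4*l), ∃ z ∈ X4,
      dist (toR y) (toR z) ≤ (4*l) ^ ((1:ℝ)/(2*(d:ℝ))))
    (hs3d : 3*(d:ℝ) ≤ l ^ ((1:ℝ)/(2*(d:ℝ))))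
    (ht_l : (4*l) ^ ((1:ℝ)/(2*(d:ℝ))) ≤ l)
    (ht2s : (4*l) ^ ((1:ℝ)/(2*(d:ℝ))) ≤ 2 * l ^ ((1:ℝ)/(2*(d:ℝ)))) :
    (Xl.ncard : ℝ) ≤ (((27*d)^d : ℕ) : ℝ) * ((X4 ∩ latBall x (2*l)).ncard : ℝ) := by
  classical
  set s := l ^ ((1:ℝ)/(2*(d:ℝ))) with hsdef
  set t := (4*l) ^ ((1:ℝ)/(2*(d:ℝ))) with htdef
  have hl0 : (0:ℝ) < l := by linarith
  have hst : s ≤ t := by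
    apply Real.rpow_le_rpow (by linarith) (by linarith) (by positivity)
  have ht1 : 1 ≤ t := by
    have : (3:ℝ) ≤ 3*d := by
      have : (1:ℝ) ≤ d := by exact_mod_cast hd
      nlinarith
    linarith
  have hXlfin : Xl.Finite :=
    Set.Finite.subset (latBall_finite x l) (fun a ha => (hXl ha).2)
  have hX4'fin : (X4 ∩ latBall x (2*l)).Finite :=
    Set.Finite.subset hX4fin Set.inter_subset_left
  set A := hXlfin.toFinset with hA
  set B := hX4'fin.toFinset with hB
  have hmem4 : ∀ a ∈ Xl, a ∈ O ∩ latBall x (4*l) := by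
    intro a ha
    obtain ⟨haO, haB⟩ := hXl ha
    refine ⟨haO, ?_⟩
    show dist (toR x) (toR a) ≤ 4*l
    have : dist (toR x) (toR a) ≤ l := haB
    linarith
  set f : (Fin d → ℤ) → (Fin d → ℤ) := fun a =>
    if h : a ∈ O ∩ latBall x (4*l) then Classical.choose (hcov a h) else a with hf
  have hfspec : ∀ a ∈ Xl, f a ∈ X4 ∧ dist (toR a) (toR (f a)) ≤ t := by
    intro a ha
    have h4 := hmem4 a ha
    rw [hf]
    simp only [dif_pos h4]
    obtain ⟨hz, hdz⟩ := Classical.choose_spec (hcov a h4)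
    exact ⟨hz, hdz⟩
  have hmaps : ∀ a ∈ A, f a ∈ B := by
    intro a haA
    rw [hA, Set.Finite.mem_toFinset] at haA
    obtain ⟨hfX4, hfd⟩ := hfspec a haA
    rw [hB, Set.Finite.mem_toFinset]
    refine ⟨hfX4, ?_⟩
    show dist (toR x) (toR (f a)) ≤ 2*l
    calc dist (toR x) (toR (f a)) ≤ dist (toR x) (toR a) + dist (toR a) (toR (f a)) :=
          dist_triangle _ _ _
      _ ≤ l + t := add_le_add (hXl haA).2 hfd
      _ ≤ 2*l := by linarith
  have hfiber : ∀ z ∈ B, ({a ∈ A | f a = z} : Finset _).card ≤ (27*d)^d := by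
    intro z hz
    have hmemS : ∀ a, a ∈ ({a ∈ A | f a = z} : Finset _) → a ∈ Xl ∧ f a = z := by
      intro a ha
      rw [Finset.mem_filter, hA, Set.Finite.mem_toFinset] at ha
      exact ha
    set S' : Set (Fin d → ℤ) := ↑({a ∈ A | f a = z} : Finset _) with hS'
    have hsub : S' ⊆ latBall z t := by
      intro a ha
      rw [hS', Finset.mem_coe] at ha
      obtain ⟨haX, hfa⟩ := hmemS a ha
      show dist (toR z) (toR a) ≤ t
      rw [dist_comm, ← hfa]
      exact (hfspec a haX).2
    have hsep' : ∀ a ∈ S', ∀ b ∈ S', a ≠ b → s ≤ dist (toR a) (toR b) := by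
      intro a ha b hb hab
      rw [hS', Finset.mem_coe] at ha hb
      exact hsep a (hmemS a ha).1 b (hmemS b hb).1 hab
    have := packing_card_le hd hsub hsep' hs3d ht1 (by rw [hsdef] at ht2s ⊢; exact ht2s)
    rwa [hS', Set.ncard_coe_finset] at this
  have hcards : A.card ≤ (27*d)^d * B.card :=
    Finset.card_le_mul_card_image_of_maps_to hmaps _ hfiber
  have hAcard : Xl.ncard = A.card := Set.ncard_eq_toFinset_card _ hXlfin
  have hBcard : (X4 ∩ latBall x (2*l)).ncard = B.card := Set.ncard_eq_toFinset_card _ hX4'fin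
  rw [hAcard, hBcard]
  exact_mod_cast hcards

lemma thresholds (hd : 2 ≤ d) {l : ℝ}
    (hbig : ((3*d:ℕ):ℝ)^(2*d) ≤ l) (h16 : (16:ℝ) ≤ l) :
    1 ≤ l ∧ (d:ℝ) ≤ l ∧ 3*(d:ℝ) ≤ l ^ ((1:ℝ)/(2*(d:ℝ))) ∧
    (4*l) ^ ((1:ℝ)/(2*(d:ℝ))) ≤ 2 * l ^ ((1:ℝ)/(2*(d:ℝ))) ∧
    (4*l) ^ ((1:ℝ)/(2*(d:ℝ))) ≤ l ∧ 1 ≤ l ^ ((1:ℝ)/(2*(d:ℝ))) := by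
  have hd1 : (1:ℝ) ≤ d := by exact_mod_cast le_trans one_le_two hd
  have hd2 : (2:ℝ) ≤ d := by exact_mod_cast hd
  have hl1 : (1:ℝ) ≤ l := by linarith
  have hl0 : (0:ℝ) < l := by linarith
  have he0 : (0:ℝ) < (1:ℝ)/(2*(d:ℝ)) := by positivity
  have heh : (1:ℝ)/(2*(d:ℝ)) ≤ 1/2 := by
    rw [div_le_div_iff₀ (by positivity) (by norm_num)]
    linarith
  have hs3d : 3*(d:ℝ) ≤ l ^ ((1:ℝ)/(2*(d:ℝ))) := by
    have h1 : ((3*d:ℕ):ℝ)^((2*d:ℕ):ℝ) ≤ l := by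
      rw [Real.rpow_natCast]; exact hbig
    have h2 := Real.rpow_le_rpow (by positivity) h1 he0.le
    rw [← Real.rpow_mul (by positivity)] at h2
    have h3 : ((2*d:ℕ):ℝ) * ((1:ℝ)/(2*(d:ℝ))) = 1 := by
      push_cast
      field_simp
    rw [h3, Real.rpow_one] at h2
    calc 3*(d:ℝ) = ((3*d:ℕ):ℝ) := by push_cast; ring
      _ ≤ _ := h2
  have hone : 1 ≤ l ^ ((1:ℝ)/(2*(d:ℝ))) := by
    calc (1:ℝ) = 1 ^ ((1:ℝ)/(2*(d:ℝ))) := (Real.one_rpow _).symm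
      _ ≤ l ^ ((1:ℝ)/(2*(d:ℝ))) := Real.rpow_le_rpow (by norm_num) hl1 he0.le
  have h4e : (4:ℝ) ^ ((1:ℝ)/(2*(d:ℝ))) ≤ 2 := by
    have : (4:ℝ) ^ ((1:ℝ)/(2*(d:ℝ))) ≤ (4:ℝ) ^ ((1:ℝ)/2) := by
      apply Real.rpow_le_rpow_of_exponent_le (by norm_num) heh
    have h42 : (4:ℝ) ^ ((1:ℝ)/2) = 2 := by
      rw [show (4:ℝ) = 2^(2:ℕ) by norm_num, ← Real.rpow_natCast (2:ℝ) 2,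
        ← Real.rpow_mul (by norm_num)]
      norm_num
    linarith
  have hmul : (4*l) ^ ((1:ℝ)/(2*(d:ℝ))) =
      (4:ℝ) ^ ((1:ℝ)/(2*(d:ℝ))) * l ^ ((1:ℝ)/(2*(d:ℝ))) :=
    Real.mul_rpow (by norm_num) hl0.le
  have ht2s : (4*l) ^ ((1:ℝ)/(2*(d:ℝ))) ≤ 2 * l ^ ((1:ℝ)/(2*(d:ℝ))) := by
    rw [hmul]
    apply mul_le_mul_of_nonneg_right h4e (by positivity)
  have hsqrt : l ^ ((1:ℝ)/(2*(d:ℝ))) ≤ l ^ ((1:ℝ)/2) :=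
    Real.rpow_le_rpow_of_exponent_le hl1 heh
  have hhalf : l ^ ((1:ℝ)/2) ≤ l / 2 := by
    rw [← Real.sqrt_eq_rpow]
    have h1 : l ≤ (l/2)^2 := by nlinarith
    calc Real.sqrt l ≤ Real.sqrt ((l/2)^2) := Real.sqrt_le_sqrt h1
      _ = l/2 := Real.sqrt_sq (by linarith)
  have ht_l : (4*l) ^ ((1:ℝ)/(2*(d:ℝ))) ≤ l := by
    calc (4*l) ^ ((1:ℝ)/(2*(d:ℝ))) ≤ 2 * l ^ ((1:ℝ)/(2*(d:ℝ))) := ht2s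
      _ ≤ 2 * (l/2) := by
          apply mul_le_mul_of_nonneg_left (le_trans hsqrt hhalf) (by norm_num)
      _ = l := by ring
  exact ⟨hl1, by linarith, hs3d, ht2s, ht_l, hone⟩

lemma rpow_half_pow {l : ℝ} (hl : 0 < l) (hd : 1 ≤ d) :
    (l ^ ((1:ℝ)/(2*(d:ℝ))))^d = l ^ ((1:ℝ)/2) := by
  have hd0 : (0:ℝ) < d := by exact_mod_cast lt_of_lt_of_le zero_lt_one hd
  rw [← Real.rpow_natCast (l ^ ((1:ℝ)/(2*(d:ℝ)))) d, ← Real.rpow_mul hl.le]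
  congr 1
  field_simp

lemma rpow_sub_half {l : ℝ} (hl : 0 < l) :
    l ^ ((d:ℝ) - 1/2) * l ^ ((1:ℝ)/2) = l^d := by
  rw [← Real.rpow_add hl, ← Real.rpow_natCast l d]
  congr 1
  ring

lemma density_lower (hd : 2 ≤ d) {O : Set (Fin d → ℤ)} {x : Fin d → ℤ}
    {Xp : Set (Fin d → ℤ)} {l δ : ℝ} (hδ : 0 < δ)
    (hbig : ((3*d:ℕ):ℝ)^(2*d) ≤ l) (h16 : (16:ℝ) ≤ l)
    (hXfin : Xp.Finite)
    (hcov : ∀ y ∈ O ∩ latBall x l, ∃ z ∈ Xp,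
      dist (toR y) (toR z) ≤ l ^ ((1:ℝ)/(2*(d:ℝ))))
    (hP : δ * ((latBall x l).ncard : ℝ) ≤ ((O ∩ latBall x l).ncard : ℝ)) :
    δ * l ^ ((d:ℝ) - 1/2) ≤ (Xp.ncard : ℝ) * (3*(d:ℝ))^d := by
  obtain ⟨hl1, hld, hs3d, _, _, hs1⟩ := thresholds hd hbig h16
  have hd1 : 1 ≤ d := le_trans one_le_two hd
  have hl0 : (0:ℝ) < l := by linarith
  have hd0 : (0:ℝ) < (d:ℝ) := by exact_mod_cast lt_of_lt_of_le zero_lt_one hd1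
  have h1 := covering_bound x hs1 hXfin hcov
  have h2 := ncard_latBall_ge x hd1 hld
  have h3 : δ * (l/d)^d ≤ (Xp.ncard : ℝ) * (3 * l ^ ((1:ℝ)/(2*(d:ℝ))))^d := by
    calc δ * (l/d)^d ≤ δ * ((latBall x l).ncard : ℝ) :=
          mul_le_mul_of_nonneg_left h2 hδ.le
      _ ≤ ((O ∩ latBall x l).ncard : ℝ) := hP
      _ ≤ _ := h1
  have h4 : (3 * l ^ ((1:ℝ)/(2*(d:ℝ))))^d = 3^d * l ^ ((1:ℝ)/2) := by
    rw [mul_pow, rpow_half_pow hl0 hd1]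
  have h5 : (l/d)^d = l^d / (d:ℝ)^d := div_pow l _ d
  have hl12 : (0:ℝ) < l ^ ((1:ℝ)/2) := Real.rpow_pos_of_pos hl0 _
  have key : δ * l^d ≤ (Xp.ncard : ℝ) * (3*(d:ℝ))^d * l ^ ((1:ℝ)/2) := by
    rw [h4] at h3
    rw [h5] at h3
    have hdd : (0:ℝ) < (d:ℝ)^d := by positivity
    rw [mul_pow]
    calc δ * l^d = (δ * (l^d / (d:ℝ)^d)) * (d:ℝ)^d := by field_simp
      _ ≤ ((Xp.ncard : ℝ) * (3^d * l ^ ((1:ℝ)/2))) * (d:ℝ)^d := by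
          apply mul_le_mul_of_nonneg_right h3 hdd.le
      _ = (Xp.ncard : ℝ) * (3^d * (d:ℝ)^d) * l ^ ((1:ℝ)/2) := by ring
  rw [← rpow_sub_half hl0] at key
  have key2 : (δ * l ^ ((d:ℝ) - 1/2)) * l ^ ((1:ℝ)/2) ≤
      ((Xp.ncard : ℝ) * (3*(d:ℝ))^d) * l ^ ((1:ℝ)/2) := by
    calc (δ * l ^ ((d:ℝ) - 1/2)) * l ^ ((1:ℝ)/2)
        = δ * (l ^ ((d:ℝ) - 1/2) * l ^ ((1:ℝ)/2)) := by ring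
      _ ≤ _ := key
  exact le_of_mul_le_mul_right key2 hl12


/-- **Choosing a radius with many deep skeletal obstacles (Lemma 3.3).**
Suppose `x ∈ O` and the density of obstacles in `B(x,L)` is below `δ`. For each
radius `l` let `X l` be a skeletal set for `O ∩ B(x,l)` (containing `x`, pairwise
distances `≥ l^{1/2d}`, covering radius `l^{1/2d}`), and let `X l ∩ B(x, l/2)` be
its deep part. Then there exists `ρ > 0` independent of `L` and `δ` such that for
some `l` with `L^{5/6} ≤ l ≤ L` one has both an obstacle density `< δ` in `B(x,l)`
and `|X°_l(x)| ≥ ρ · min(|X_l(x)|, δ l^{d-1/2})`. -/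
theorem deep_skeletal_radius (d : ℕ) (hd : 2 ≤ d) :
    ∃ ρ : ℝ, 0 < ρ ∧
      ∀ (O : Set (Fin d → ℤ)) (x : Fin d → ℤ) (L : ℕ) (δ : ℝ)
        (X : ℝ → Set (Fin d → ℤ)),
        1 ≤ L → 0 < δ → x ∈ O →
        ((O ∩ latBall x (L : ℝ)).ncard : ℝ) < δ * ((latBall x (L : ℝ)).ncard : ℝ) →
        (∀ l : ℝ, 1 ≤ l →
          (X l).Finite ∧ X l ⊆ O ∩ latBall x l ∧ x ∈ X l ∧
          (∀ a ∈ X l, ∀ b ∈ X l, a ≠ b →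
            l ^ ((1 : ℝ) / (2 * (d : ℝ))) ≤ dist (toR a) (toR b)) ∧
          (∀ y ∈ O ∩ latBall x l, ∃ z ∈ X l,
            dist (toR y) (toR z) ≤ l ^ ((1 : ℝ) / (2 * (d : ℝ))))) →
        ∃ l : ℝ, (L : ℝ) ^ ((5 : ℝ) / 6) ≤ l ∧ l ≤ (L : ℝ) ∧
          ((O ∩ latBall x l).ncard : ℝ) < δ * ((latBall x l).ncard : ℝ) ∧
          ρ * min ((X l).ncard : ℝ) (δ * l ^ ((d : ℝ) - 1 / 2)) ≤
            (((X l ∩ latBall x (l / 2)).ncard : ℝ)) := by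
  classical
  have hd1 : 1 ≤ d := le_trans one_le_two hd
  have hdR : (2:ℝ) ≤ (d:ℝ) := by exact_mod_cast hd
  set C : ℕ := (27*d)^d with hC
  set M : ℕ := 110592 * d with hM
  set L₀ : ℕ := M^(6*d) with hL₀def
  have hC1 : (1:ℝ) ≤ (C:ℝ) := by
    have : 1 ≤ C := Nat.one_le_iff_ne_zero.mpr (by positivity)
    exact_mod_cast this
  have hL₀1 : 1 ≤ L₀ := Nat.one_le_iff_ne_zero.mpr (by positivity)
  set D : ℝ := ((3*L₀ : ℕ):ℝ)^d * (C:ℝ)^2 * 4^d * 2^(36*d) with hD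
  have h3L₀1 : (1:ℝ) ≤ ((3*L₀:ℕ):ℝ)^d := by
    apply one_le_pow₀
    have : 1 ≤ 3*L₀ := by omega
    exact_mod_cast this
  have hD1 : (1:ℝ) ≤ D := by
    rw [hD]
    have h4 : (1:ℝ) ≤ (4:ℝ)^d := one_le_pow₀ (by norm_num)
    have h2 : (1:ℝ) ≤ (2:ℝ)^(36*d) := one_le_pow₀ (by norm_num)
    have hCsq : (1:ℝ) ≤ (C:ℝ)^2 := one_le_pow₀ hC1
    calc (1:ℝ) ≤ ((3*L₀:ℕ):ℝ)^d := h3L₀1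
      _ ≤ ((3*L₀:ℕ):ℝ)^d * (C:ℝ)^2 := le_mul_of_one_le_right (by positivity) hCsq
      _ ≤ ((3*L₀:ℕ):ℝ)^d * (C:ℝ)^2 * 4^d := le_mul_of_one_le_right (by positivity) h4
      _ ≤ _ := le_mul_of_one_le_right (by positivity) h2
  have hD0 : (0:ℝ) < D := by linarith
  refine ⟨1/D, by positivity, ?_⟩
  intro O x L δ X hL hδ hxO hdens hX
  have hLR : (1:ℝ) ≤ (L:ℝ) := by exact_mod_cast hL
  have hL0R : (0:ℝ) < (L:ℝ) := by linarith
  have h56L : (L:ℝ) ^ ((5:ℝ)/6) ≤ (L:ℝ) := by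
    calc (L:ℝ) ^ ((5:ℝ)/6) ≤ (L:ℝ) ^ ((1:ℝ)) :=
          Real.rpow_le_rpow_of_exponent_le hLR (by norm_num)
      _ = L := Real.rpow_one _
  rcases lt_or_ge L L₀ with hsmall | hbig
  -- SMALL CASE
  · obtain ⟨hfin, hsub, hxmem, _, _⟩ := hX (L:ℝ) hLR
    refine ⟨(L:ℝ), h56L, le_refl _, hdens, ?_⟩
    have hfin2 : (X (L:ℝ) ∩ latBall x ((L:ℝ)/2)).Finite :=
      hfin.subset Set.inter_subset_left
    have hx2 : x ∈ X (L:ℝ) ∩ latBall x ((L:ℝ)/2) := by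
      refine ⟨hxmem, ?_⟩
      show dist (toR x) (toR x) ≤ (L:ℝ)/2
      rw [dist_self]; linarith
    have h1le : (1:ℝ) ≤ ((X (L:ℝ) ∩ latBall x ((L:ℝ)/2)).ncard : ℝ) := by
      have : 0 < (X (L:ℝ) ∩ latBall x ((L:ℝ)/2)).ncard :=
        (Set.ncard_pos hfin2).mpr ⟨x, hx2⟩
      exact_mod_cast this
    have hXle : ((X (L:ℝ)).ncard : ℝ) ≤ (3*(L:ℝ))^d :=
      subset_ncard_le x hLR (fun a ha => (hsub ha).2)
    have hminle : min ((X (L:ℝ)).ncard : ℝ) (δ * (L:ℝ) ^ ((d:ℝ) - 1/2)) ≤ (3*(L:ℝ))^d :=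
      le_trans (min_le_left _ _) hXle
    have hmin0 : 0 ≤ min ((X (L:ℝ)).ncard : ℝ) (δ * (L:ℝ) ^ ((d:ℝ) - 1/2)) := by
      apply le_min (by positivity) (by positivity)
    have hDL : (3*(L:ℝ))^d ≤ D := by
      calc (3*(L:ℝ))^d ≤ ((3*L₀:ℕ):ℝ)^d := by
            apply pow_le_pow_left₀ (by positivity)
            push_cast
            have : (L:ℝ) ≤ L₀ := by exact_mod_cast hsmall.le
            linarith
        _ ≤ D := by
            rw [hD]
            have h4 : (1:ℝ) ≤ (4:ℝ)^d := one_le_pow₀ (by norm_num)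
            have h2 : (1:ℝ) ≤ (2:ℝ)^(36*d) := one_le_pow₀ (by norm_num)
            have hCsq : (1:ℝ) ≤ (C:ℝ)^2 := one_le_pow₀ hC1
            calc ((3*L₀:ℕ):ℝ)^d ≤ ((3*L₀:ℕ):ℝ)^d * (C:ℝ)^2 :=
                  le_mul_of_one_le_right (by positivity) hCsq
              _ ≤ ((3*L₀:ℕ):ℝ)^d * (C:ℝ)^2 * 4^d :=
                  le_mul_of_one_le_right (by positivity) h4
              _ ≤ _ := le_mul_of_one_le_right (by positivity) h2
    calc (1/D) * min ((X (L:ℝ)).ncard : ℝ) (δ * (L:ℝ) ^ ((d:ℝ) - 1/2))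
        ≤ (1/D) * (3*(L:ℝ))^d := by
          apply mul_le_mul_of_nonneg_left hminle (by positivity)
      _ ≤ (1/D) * D := by
          apply mul_le_mul_of_nonneg_left hDL (by positivity)
      _ = 1 := by field_simp
      _ ≤ _ := h1le
  -- BIG CASE
  · set J : ℕ := Nat.log 2 L / 12 with hJdef
    set lj : ℕ → ℝ := fun j => (L:ℝ)/4^j with hljdef
    have hLne : L ≠ 0 := by omega
    have h2J : (2:ℕ)^(12*J) ≤ L := by
      calc (2:ℕ)^(12*J) ≤ 2^(Nat.log 2 L) := by
            apply Nat.pow_le_pow_right (by norm_num)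
            omega
        _ ≤ L := Nat.pow_log_le_self 2 hLne
    have hLlt : L < 2^(12*J+12) := by
      have h1 := Nat.lt_pow_succ_log_self (by norm_num : 1 < 2) L
      have h2 : Nat.log 2 L + 1 ≤ 12*J+12 := by omega
      exact lt_of_lt_of_le h1 (Nat.pow_le_pow_right (by norm_num) h2)
    have h4J6 : ((4:ℝ)^J)^(6:ℕ) ≤ (L:ℝ) := by
      have he : ((4:ℝ)^J)^(6:ℕ) = (2:ℝ)^(12*J) := by
        rw [show (4:ℝ) = 2^(2:ℕ) by norm_num, ← pow_mul, ← pow_mul]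
        ring_nf
      rw [he]
      exact_mod_cast h2J
    have h4Jpos : (0:ℝ) < (4:ℝ)^J := by positivity
    have h4JL : (4:ℝ)^J ≤ (L:ℝ)^((1:ℝ)/6) := by
      have h1 : ((4:ℝ)^J)^((6:ℕ):ℝ) ≤ (L:ℝ) := by
        rw [Real.rpow_natCast]; exact h4J6
      have h2 := Real.rpow_le_rpow (by positivity) h1 (by norm_num : (0:ℝ) ≤ 1/6)
      rwa [← Real.rpow_mul (by positivity), show ((6:ℕ):ℝ)*(1/6) = 1 by norm_num,
        Real.rpow_one] at h2
    have hlj_pos : ∀ j, 0 < lj j := fun j => by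
      rw [hljdef]; positivity
    have hlj_le : ∀ j : ℕ, lj j ≤ (L:ℝ) := by
      intro j
      rw [hljdef]
      apply div_le_self hL0R.le (one_le_pow₀ (by norm_num))
    have hlj_ge : ∀ j ≤ J, (L:ℝ) ^ ((5:ℝ)/6) ≤ lj j := by
      intro j hj
      have h1 : (L:ℝ) ^ ((5:ℝ)/6) = (L:ℝ) / (L:ℝ)^((1:ℝ)/6) := by
        rw [eq_div_iff (by positivity), ← Real.rpow_add hL0R]
        norm_num
      rw [h1, hljdef]
      apply div_le_div_of_nonneg_left hL0R.le (by positivity)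
      calc (4:ℝ)^j ≤ (4:ℝ)^J := pow_le_pow_right₀ (by norm_num) hj
        _ ≤ (L:ℝ)^((1:ℝ)/6) := h4JL
    -- threshold inputs at every l ≥ L^{5/6}
    have hM1 : (1:ℝ) ≤ (M:ℝ) := by
      have : 1 ≤ M := by rw [hM]; omega
      exact_mod_cast this
    have hM5d : ((M:ℝ))^(5*d) ≤ (L:ℝ)^((5:ℝ)/6) := by
      have h1 : ((L₀:ℕ):ℝ) ≤ (L:ℝ) := by exact_mod_cast hbig
      have h2 : ((L₀:ℕ):ℝ)^((5:ℝ)/6) ≤ (L:ℝ)^((5:ℝ)/6) :=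
        Real.rpow_le_rpow (by positivity) h1 (by norm_num)
      have h3 : ((L₀:ℕ):ℝ)^((5:ℝ)/6) = (M:ℝ)^(5*d) := by
        rw [hL₀def]
        push_cast
        rw [← Real.rpow_natCast (M:ℝ) (6*d), ← Real.rpow_mul (by positivity),
          ← Real.rpow_natCast (M:ℝ) (5*d)]
        congr 1
        push_cast
        ring
      rwa [h3] at h2
    have hthr : ∀ l : ℝ, (L:ℝ) ^ ((5:ℝ)/6) ≤ l →
        ((3*d:ℕ):ℝ)^(2*d) ≤ l ∧ (16:ℝ) ≤ l := by
      intro l hl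
      have hMl : ((M:ℝ))^(5*d) ≤ l := le_trans hM5d hl
      constructor
      · calc ((3*d:ℕ):ℝ)^(2*d) ≤ (M:ℝ)^(2*d) := by
              apply pow_le_pow_left₀ (by positivity)
              have : 3*d ≤ M := by rw [hM]; omega
              exact_mod_cast this
          _ ≤ (M:ℝ)^(5*d) := pow_le_pow_right₀ hM1 (by omega)
          _ ≤ l := hMl
      · calc (16:ℝ) ≤ (M:ℝ) := by
              have : 16 ≤ M := by rw [hM]; omega
              exact_mod_cast this
          _ = (M:ℝ)^1 := (pow_one _).symm
          _ ≤ (M:ℝ)^(5*d) := pow_le_pow_right₀ hM1 (by omega)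
          _ ≤ l := hMl
    have hlj1 : ∀ j ≤ J, (1:ℝ) ≤ lj j := by
      intro j hj
      have := (hthr (lj j) (hlj_ge j hj)).2
      linarith
    -- comparison step
    have hcomp : ∀ j, j+1 ≤ J →
        ((X (lj (j+1))).ncard : ℝ) ≤
          (C:ℝ) * ((X (lj j) ∩ latBall x (lj j / 2)).ncard : ℝ) := by
      intro j hj1
      have h4l : 4 * lj (j+1) = lj j := by
        rw [hljdef]
        simp only []
        rw [pow_succ]
        field_simp
      have h2l : lj j / 2 = 2 * lj (j+1) := by rw [← h4l]; ring
      have hl1' : (1:ℝ) ≤ lj (j+1) := hlj1 _ hj1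
      obtain ⟨hbig1, h16⟩ := hthr (lj (j+1)) (hlj_ge _ hj1)
      obtain ⟨_, _, hs3d, ht2s, ht_l, _⟩ := thresholds hd hbig1 h16
      obtain ⟨hfin1, hsub1, _, hsep1, _⟩ := hX (lj (j+1)) hl1'
      obtain ⟨hfin0, _, _, _, hcov0⟩ := hX (lj j) (hlj1 j (by omega))
      have hcov0' : ∀ y ∈ O ∩ latBall x (4 * lj (j+1)), ∃ z ∈ X (lj j),
          dist (toR y) (toR z) ≤ (4 * lj (j+1)) ^ ((1:ℝ)/(2*(d:ℝ))) := by
        rw [h4l]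
        exact hcov0
      rw [h2l]
      have := comparison hd1 hl1' hsub1 hsep1 hfin0 hcov0' hs3d ht_l ht2s
      rw [hC]
      exact this
    -- every X (lj j) contains x
    have hXn1 : ∀ j ≤ J, (1:ℝ) ≤ ((X (lj j)).ncard : ℝ) := by
      intro j hj
      obtain ⟨hfin, _, hxmem, _, _⟩ := hX (lj j) (hlj1 j hj)
      have : 0 < (X (lj j)).ncard := (Set.ncard_pos hfin).mpr ⟨x, hxmem⟩
      exact_mod_cast this
    by_contra hcon
    push_neg at hcon
    by_cases hex : ∃ j, j ≤ J ∧
        δ * ((latBall x (lj j)).ncard : ℝ) ≤ ((O ∩ latBall x (lj j)).ncard : ℝ)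
    -- CASE (i): density fails somewhere
    · have hfs := Nat.find_spec hex
      set p := Nat.find hex with hp
      obtain ⟨hpJ, hpP⟩ := hfs
      have hp0 : p ≠ 0 := by
        intro h0
        rw [h0] at hpP
        have hlj0 : lj 0 = (L:ℝ) := by rw [hljdef]; simp
        rw [hlj0] at hpP
        exact absurd hpP (not_le.mpr hdens)
      obtain ⟨q, hq⟩ : ∃ q, p = q+1 := ⟨p-1, by omega⟩
      have hqJ : q ≤ J := by omega
      have hq1J : q+1 ≤ J := by omega
      have hqdens : ((O ∩ latBall x (lj q)).ncard : ℝ) <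
          δ * ((latBall x (lj q)).ncard : ℝ) := by
        have hlt : q < Nat.find hex := by omega
        have := Nat.find_min hex hlt
        push_neg at this
        exact this hqJ
      have hbad := hcon (lj q) (hlj_ge q hqJ) (hlj_le q) hqdens
      -- density lower bound at lj (q+1)
      rw [hq] at hpP
      obtain ⟨hbig1, h16⟩ := hthr (lj (q+1)) (hlj_ge _ hq1J)
      obtain ⟨hfin1, _, _, _, hcov1⟩ := hX (lj (q+1)) (hlj1 _ hq1J)
      have hdl := density_lower hd hδ hbig1 h16 hfin1 hcov1 hpP
      have hcm := hcomp q hq1J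
      -- exponent comparison
      have h14 : lj (q+1) = lj q / 4 := by
        rw [hljdef]
        simp only []
        rw [pow_succ]
        field_simp
      have hexp : (lj q) ^ ((d:ℝ) - 1/2) / 4^d ≤ (lj (q+1)) ^ ((d:ℝ) - 1/2) := by
        rw [h14, Real.div_rpow (hlj_pos q).le (by norm_num)]
        apply div_le_div_of_nonneg_left (Real.rpow_nonneg (hlj_pos q).le _)
          (by positivity)
        calc (4:ℝ) ^ ((d:ℝ) - 1/2) ≤ (4:ℝ) ^ ((d:ℝ)) :=
              Real.rpow_le_rpow_of_exponent_le (by norm_num) (by linarith)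
          _ = 4^d := Real.rpow_natCast 4 d
      -- combine
      have hCpos : (0:ℝ) < (C:ℝ) := by linarith
      have h3dC : ((3*(d:ℝ))^d * (C:ℝ)) * 4^d ≤ D := by
        rw [hD]
        have h3dle : (3*(d:ℝ))^d ≤ (C:ℝ) := by
          rw [hC]
          push_cast
          apply pow_le_pow_left₀ (by positivity)
          push_cast
          linarith
        have h2 : (1:ℝ) ≤ (2:ℝ)^(36*d) := one_le_pow₀ (by norm_num)
        have h4p : (0:ℝ) < (4:ℝ)^d := by positivity
        calc ((3*(d:ℝ))^d * (C:ℝ)) * 4^d ≤ ((C:ℝ) * (C:ℝ)) * 4^d := by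
              apply mul_le_mul_of_nonneg_right
                (mul_le_mul_of_nonneg_right h3dle hCpos.le) h4p.le
          _ = (C:ℝ)^2 * 4^d := by ring
          _ ≤ ((3*L₀:ℕ):ℝ)^d * (C:ℝ)^2 * 4^d := by
              rw [mul_assoc]
              exact le_mul_of_one_le_left (by positivity) h3L₀1
          _ ≤ _ := le_mul_of_one_le_right (by positivity) h2
      -- Xdeep_q ≥ δ (lj q)^{d-1/2} / D
      have hdeep : δ * (lj q) ^ ((d:ℝ) - 1/2) / D ≤
          ((X (lj q) ∩ latBall x (lj q / 2)).ncard : ℝ) := by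
        have t1 : δ * (lj q) ^ ((d:ℝ) - 1/2) / D ≤
            δ * (lj q) ^ ((d:ℝ) - 1/2) / (((3*(d:ℝ))^d * (C:ℝ)) * 4^d) := by
          apply div_le_div_of_nonneg_left (by positivity) (by positivity) h3dC
        refine le_trans t1 ?_
        rw [div_le_iff₀ (by positivity)]
        -- δ (lj q)^{d-1/2} ≤ Xdeep * ((3d)^d C 4^d)
        have s1 : δ * (lj q) ^ ((d:ℝ) - 1/2) ≤ δ * ((lj (q+1)) ^ ((d:ℝ) - 1/2) * 4^d) := by
          have := mul_le_mul_of_nonneg_left hexp hδ.le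
          have h4p : (0:ℝ) < (4:ℝ)^d := by positivity
          calc δ * (lj q) ^ ((d:ℝ) - 1/2)
              = (δ * ((lj q) ^ ((d:ℝ) - 1/2) / 4^d)) * 4^d := by field_simp
            _ ≤ (δ * (lj (q+1)) ^ ((d:ℝ) - 1/2)) * 4^d := by
                apply mul_le_mul_of_nonneg_right
                  (mul_le_mul_of_nonneg_left hexp hδ.le) h4p.le
            _ = δ * ((lj (q+1)) ^ ((d:ℝ) - 1/2) * 4^d) := by ring
        have s2 : δ * (lj (q+1)) ^ ((d:ℝ) - 1/2) ≤
            ((X (lj (q+1))).ncard : ℝ) * (3*(d:ℝ))^d := hdl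
        have s3 : ((X (lj (q+1))).ncard : ℝ) ≤
            (C:ℝ) * ((X (lj q) ∩ latBall x (lj q / 2)).ncard : ℝ) := hcm
        have h4p : (0:ℝ) ≤ (4:ℝ)^d := by positivity
        have h3dp : (0:ℝ) ≤ (3*(d:ℝ))^d := by positivity
        calc δ * (lj q) ^ ((d:ℝ) - 1/2)
            ≤ (δ * (lj (q+1)) ^ ((d:ℝ) - 1/2)) * 4^d := by
              calc δ * (lj q) ^ ((d:ℝ) - 1/2)
                  ≤ δ * ((lj (q+1)) ^ ((d:ℝ) - 1/2) * 4^d) := s1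
                _ = (δ * (lj (q+1)) ^ ((d:ℝ) - 1/2)) * 4^d := by ring
          _ ≤ (((X (lj (q+1))).ncard : ℝ) * (3*(d:ℝ))^d) * 4^d :=
              mul_le_mul_of_nonneg_right s2 h4p
          _ ≤ (((C:ℝ) * ((X (lj q) ∩ latBall x (lj q / 2)).ncard : ℝ)) * (3*(d:ℝ))^d) * 4^d := by
              apply mul_le_mul_of_nonneg_right
                (mul_le_mul_of_nonneg_right s3 h3dp) h4p
          _ = ((X (lj q) ∩ latBall x (lj q / 2)).ncard : ℝ) * ((3*(d:ℝ))^d * (C:ℝ) * 4^d) := by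
              ring
      -- but hbad says the opposite
      have hminle : min ((X (lj q)).ncard : ℝ) (δ * (lj q) ^ ((d:ℝ) - 1/2)) ≤
          δ * (lj q) ^ ((d:ℝ) - 1/2) := min_le_right _ _
      have : (1/D) * min ((X (lj q)).ncard : ℝ) (δ * (lj q) ^ ((d:ℝ) - 1/2)) ≤
          ((X (lj q) ∩ latBall x (lj q / 2)).ncard : ℝ) := by
        calc (1/D) * min ((X (lj q)).ncard : ℝ) (δ * (lj q) ^ ((d:ℝ) - 1/2))
            ≤ (1/D) * (δ * (lj q) ^ ((d:ℝ) - 1/2)) := by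
              apply mul_le_mul_of_nonneg_left hminle (by positivity)
          _ = δ * (lj q) ^ ((d:ℝ) - 1/2) / D := by ring
          _ ≤ _ := hdeep
      linarith
    -- CASE (ii): density holds everywhere along the dyadic chain
    · push_neg at hex
      have hdensall : ∀ j ≤ J, ((O ∩ latBall x (lj j)).ncard : ℝ) <
          δ * ((latBall x (lj j)).ncard : ℝ) := by
        intro j hj
        exact hex j hj
      have hIH : ∀ j, j ≤ J →
          ((X (lj j)).ncard : ℝ) ≤ ((C:ℝ)*(1/D))^j * (3*(L:ℝ))^d := by
        intro j
        induction j with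
        | zero =>
          intro _
          have hlj0 : lj 0 = (L:ℝ) := by rw [hljdef]; simp
          obtain ⟨_, hsub, _, _, _⟩ := hX (lj 0) (hlj1 0 (by omega))
          have := subset_ncard_le x (by rw [hlj0]; exact hLR)
            (fun a ha => (hsub ha).2)
          rw [hlj0] at this ⊢
          simpa using this
        | succ j ih =>
          intro hj1
          have hjJ : j ≤ J := by omega
          have hbad := hcon (lj j) (hlj_ge j hjJ) (hlj_le j) (hdensall j hjJ)
          have hcm := hcomp j hj1
          have hminle : min ((X (lj j)).ncard : ℝ) (δ * (lj j) ^ ((d:ℝ) - 1/2)) ≤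
              ((X (lj j)).ncard : ℝ) := min_le_left _ _
          have hCpos : (0:ℝ) < (C:ℝ) := by linarith
          calc ((X (lj (j+1))).ncard : ℝ)
              ≤ (C:ℝ) * ((X (lj j) ∩ latBall x (lj j / 2)).ncard : ℝ) := hcm
            _ ≤ (C:ℝ) * ((1/D) * min ((X (lj j)).ncard : ℝ) (δ * (lj j) ^ ((d:ℝ) - 1/2))) :=
                mul_le_mul_of_nonneg_left hbad.le hCpos.le
            _ ≤ (C:ℝ) * ((1/D) * ((X (lj j)).ncard : ℝ)) := by
                apply mul_le_mul_of_nonneg_left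
                  (mul_le_mul_of_nonneg_left hminle (by positivity)) hCpos.le
            _ = ((C:ℝ)*(1/D)) * ((X (lj j)).ncard : ℝ) := by ring
            _ ≤ ((C:ℝ)*(1/D)) * (((C:ℝ)*(1/D))^j * (3*(L:ℝ))^d) := by
                apply mul_le_mul_of_nonneg_left (ih hjJ) (by positivity)
            _ = ((C:ℝ)*(1/D))^(j+1) * (3*(L:ℝ))^d := by ring
      -- numeric contradiction
      have hfinal := hIH J le_rfl
      have hone := hXn1 J le_rfl
      -- (C/D)^J * (3L)^d < 1
      have hCρ : (C:ℝ)*(1/D) ≤ 1/2^(36*d) := by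
        rw [mul_one_div, div_le_div_iff₀ hD0 (by positivity : (0:ℝ) < 2^(36*d))]
        have hCD : (C:ℝ) * 2^(36*d) ≤ D := by
          rw [hD]
          have step : (C:ℝ) ≤ ((3*L₀:ℕ):ℝ)^d * (C:ℝ)^2 * 4^d := by
            have h4 : (1:ℝ) ≤ (4:ℝ)^d := one_le_pow₀ (by norm_num)
            calc (C:ℝ) ≤ (C:ℝ)^2 := by nlinarith
              _ ≤ ((3*L₀:ℕ):ℝ)^d * (C:ℝ)^2 := le_mul_of_one_le_left (by positivity) h3L₀1
              _ ≤ _ := le_mul_of_one_le_right (by positivity) h4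
          calc (C:ℝ) * 2^(36*d) ≤ (((3*L₀:ℕ):ℝ)^d * (C:ℝ)^2 * 4^d) * 2^(36*d) :=
                mul_le_mul_of_nonneg_right step (by positivity)
            _ = _ := by ring
        linarith
      have hLreal : (L:ℝ) < 4096 * 2^(12*J) := by
        have h1 : (L:ℝ) < (((2:ℕ)^(12*J+12) : ℕ) : ℝ) := by exact_mod_cast hLlt
        have h2 : (((2:ℕ)^(12*J+12) : ℕ) : ℝ) = 4096 * 2^(12*J) := by
          push_cast
          rw [pow_add]
          norm_num
          ring
        linarith [h2 ▸ h1]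
      have hnum : (3:ℝ)^d * 4096^(3*d) ≤ (L:ℝ) := by
        have hnat : 3^d * 4096^(3*d) ≤ L₀ := by
          calc 3^d * 4096^(3*d) ≤ 3^(3*d) * 4096^(3*d) :=
                Nat.mul_le_mul_right _ (Nat.pow_le_pow_right (by norm_num) (by omega))
            _ = 12288^(3*d) := by rw [← Nat.mul_pow]
            _ ≤ M^(3*d) := Nat.pow_le_pow_left (by rw [hM]; omega) _
            _ ≤ M^(6*d) := Nat.pow_le_pow_right (by rw [hM]; omega) (by omega)
        exact_mod_cast le_trans hnat hbig
      have hL2d : (L:ℝ) ≤ (L:ℝ)^(2*d) := by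
        calc (L:ℝ) = (L:ℝ)^1 := (pow_one _).symm
          _ ≤ (L:ℝ)^(2*d) := pow_le_pow_right₀ hLR (by omega)
      have key1 : (3*(L:ℝ))^d * 4096^(3*d) ≤ (L:ℝ)^(3*d) := by
        calc (3*(L:ℝ))^d * 4096^(3*d) = ((3:ℝ)^d * 4096^(3*d)) * (L:ℝ)^d := by
              rw [mul_pow]; ring
          _ ≤ ((L:ℝ)^(2*d)) * (L:ℝ)^d :=
              mul_le_mul_of_nonneg_right (le_trans hnum hL2d) (by positivity)
          _ = (L:ℝ)^(3*d) := by rw [← pow_add]; ring_nf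
      have h4096 : (0:ℝ) < (4096:ℝ)^(3*d) := by positivity
      have key2 : (L:ℝ)^(3*d) < ((2:ℝ)^(12*J))^(3*d) * 4096^(3*d) := by
        calc (L:ℝ)^(3*d) < (4096 * 2^(12*J))^(3*d) := by
              apply pow_lt_pow_left₀ hLreal (by positivity)
              omega
          _ = ((2:ℝ)^(12*J))^(3*d) * 4096^(3*d) := by rw [mul_pow]; ring
      have key3 : (3*(L:ℝ))^d < ((2:ℝ)^(12*J))^(3*d) := by
        have := lt_of_le_of_lt key1 key2
        exact lt_of_mul_lt_mul_right this h4096.le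
      have hpowJ : ((C:ℝ)*(1/D))^J ≤ 1/(((2:ℝ)^(12*J))^(3*d)) := by
        have e1 : ((1:ℝ)/2^(36*d))^J = 1/(((2:ℝ)^(12*J))^(3*d)) := by
          rw [div_pow, one_pow, ← pow_mul, ← pow_mul]
          congr 2
          ring
        calc ((C:ℝ)*(1/D))^J ≤ ((1:ℝ)/2^(36*d))^J :=
              pow_le_pow_left₀ (by positivity) hCρ J
          _ = _ := e1
      have hT : (0:ℝ) < ((2:ℝ)^(12*J))^(3*d) := by positivity
      have hcontr : ((C:ℝ)*(1/D))^J * (3*(L:ℝ))^d < 1 := by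
        calc ((C:ℝ)*(1/D))^J * (3*(L:ℝ))^d
            ≤ (1/(((2:ℝ)^(12*J))^(3*d))) * (3*(L:ℝ))^d :=
              mul_le_mul_of_nonneg_right hpowJ (by positivity)
          _ < (1/(((2:ℝ)^(12*J))^(3*d))) * (((2:ℝ)^(12*J))^(3*d)) := by
              apply mul_lt_mul_of_pos_left key3 (by positivity)
          _ = 1 := by field_simp
      linarith
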